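/- Let m ≡ 7 (mod 12) with m ≥ 7, n = 2^m - 1, and v = 2^((m+1)/2) - 1. Then gcd(v, n) = 1, and for every integer a with 1 ≤ a ≤ 2^((m-1)/2), the binary digit sum of (a·v mod n) is congruent to 0, 4, or 5 modulo 6. -/

import Mathlib

/-- Binary digit sum recursion, valid for all `n`. -/
lemma dsum_rec (n : ℕ) :
    (Nat.digits 2 n).sum = n % 2 + (Nat.digits 2 (n / 2)).sum := by
  rcases Nat.eq_zero_or_pos n with h | h
  · simp [h]
  · rw [Nat.digits_def' (by norm_num) h]; simp [Nat.add_comm]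

/-- Complement identity for binary digit sums. -/
lemma dsum_compl : ∀ t x : ℕ, x < 2 ^ t →
    (Nat.digits 2 x).sum + (Nat.digits 2 (2 ^ t - 1 - x)).sum = t := by
  intro t
  induction t with
  | zero => intro x hx; interval_cases x; simp
  | succ t ih =>
    intro x hx
    have h2 : 2 ^ (t + 1) = 2 * 2 ^ t := by ring
    have hx2 : x / 2 < 2 ^ t := by omega
    have key := ih (x / 2) hx2
    have hpos : 0 < 2 ^ t := Nat.pow_pos (by norm_num)
    have hdiv : (2 ^ (t + 1) - 1 - x) / 2 = 2 ^ t - 1 - x / 2 := by omega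
    have hmod : (2 ^ (t + 1) - 1 - x) % 2 = 1 - x % 2 := by omega
    rw [dsum_rec x, dsum_rec (2 ^ (t + 1) - 1 - x), hdiv, hmod]
    omega

/-- Splitting a binary number into low and high parts. -/
lemma dsum_split : ∀ t u r : ℕ, r < 2 ^ t →
    (Nat.digits 2 (u * 2 ^ t + r)).sum = (Nat.digits 2 u).sum + (Nat.digits 2 r).sum := by
  intro t
  induction t with
  | zero => intro u r hr; interval_cases r; simp
  | succ t ih =>
    intro u r hr
    have h2 : 2 ^ (t + 1) = 2 * 2 ^ t := by ring
    have hr2 : r / 2 < 2 ^ t := by omega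
    have key := ih u (r / 2) hr2
    have hkey2 : u * 2 ^ (t + 1) = 2 * (u * 2 ^ t) := by ring
    have hd : (u * 2 ^ (t + 1) + r) / 2 = u * 2 ^ t + r / 2 := by
      rw [hkey2]; generalize u * 2 ^ t = c; omega
    have hmm : (u * 2 ^ (t + 1) + r) % 2 = r % 2 := by
      rw [hkey2]; generalize u * 2 ^ t = c; omega
    rw [dsum_rec (u * 2 ^ (t + 1) + r), hd, hmm, key, dsum_rec r]
    omega

/-- Digit sum of `a * (2^t - 1)` for `1 ≤ a ≤ 2^t` is `t`. -/
lemma dsum_mul_pred (t a : ℕ) (h1 : 1 ≤ a) (h2 : a ≤ 2 ^ t) :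
    (Nat.digits 2 (a * (2 ^ t - 1))).sum = t := by
  have hpos : 0 < 2 ^ t := Nat.pow_pos (by norm_num)
  have heq : a * (2 ^ t - 1) = (a - 1) * 2 ^ t + (2 ^ t - a) := by
    have e1 : a * (2 ^ t - 1) = a * 2 ^ t - a := by
      rw [Nat.mul_sub]; simp
    have e2 : a * 2 ^ t = (a - 1) * 2 ^ t + 2 ^ t := by
      cases' a with a
      · omega
      · simp [Nat.add_mul]
    rw [e1, e2]
    generalize (a - 1) * 2 ^ t = P
    omega
  rw [heq, dsum_split t (a - 1) (2 ^ t - a) (by omega)]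
  have : 2 ^ t - a = 2 ^ t - 1 - (a - 1) := by omega
  rw [this]
  exact dsum_compl t (a - 1) (by omega)

theorem m7mod12_defSet (m : ℕ) (hm : 7 ≤ m) (h : m % 12 = 7) :
    Nat.gcd (2 ^ ((m + 1) / 2) - 1) (2 ^ m - 1) = 1 ∧
    ∀ a : ℕ, 1 ≤ a → a ≤ 2 ^ ((m - 1) / 2) →
      (Nat.digits 2 (a * (2 ^ ((m + 1) / 2) - 1) % (2 ^ m - 1))).sum % 6 = 0 ∨
      (Nat.digits 2 (a * (2 ^ ((m + 1) / 2) - 1) % (2 ^ m - 1))).sum % 6 = 4 ∨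
      (Nat.digits 2 (a * (2 ^ ((m + 1) / 2) - 1) % (2 ^ m - 1))).sum % 6 = 5 := by
  set t := (m + 1) / 2 with ht
  set s := (m - 1) / 2 with hs
  have hst : s + t = m := by omega
  have h2t : 2 * t = m + 1 := by omega
  have hts : s ≤ t := by omega
  have hpt : (1:ℕ) < 2 ^ t := Nat.one_lt_two_pow (by omega)
  have hps : (1:ℕ) < 2 ^ s := Nat.one_lt_two_pow (by omega)
  have hpm : (1:ℕ) < 2 ^ m := Nat.one_lt_two_pow (by omega)
  constructor
  · -- gcd part: (2^t - 1)(2^t + 1) = 2*(2^m - 1) + 1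
    have hkey : (2 ^ t - 1) * (2 ^ t + 1) = 2 * (2 ^ m - 1) + 1 := by
      have hsq : 2 ^ t * 2 ^ t = 2 * 2 ^ m := by
        rw [← pow_add, ← pow_succ']
        congr 1
        omega
      obtain ⟨Y, hY⟩ : ∃ Y, 2 ^ t = Y + 1 := ⟨2 ^ t - 1, by omega⟩
      rw [hY] at hsq ⊢
      have hsq' : Y * Y + 2 * Y + 1 = 2 * 2 ^ m := by ring_nf; ring_nf at hsq; omega
      simp only [Nat.add_sub_cancel]
      have : Y * (Y + 1 + 1) = Y * Y + 2 * Y := by ring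
      omega
    set d := Nat.gcd (2 ^ t - 1) (2 ^ m - 1) with hd
    have hd1 : d ∣ (2 ^ t - 1) * (2 ^ t + 1) := (Nat.gcd_dvd_left _ _).mul_right _
    have hd2 : d ∣ 2 * (2 ^ m - 1) := (Nat.gcd_dvd_right _ _).mul_left _
    have : d ∣ 1 := by
      have := Nat.dvd_sub hd1 hd2
      rwa [hkey, Nat.add_sub_cancel_left] at this
    exact Nat.dvd_one.mp this
  · intro a ha1 ha2
    have hlt : a * (2 ^ t - 1) < 2 ^ m - 1 := by
      have hb : a * (2 ^ t - 1) ≤ 2 ^ s * (2 ^ t - 1) :=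
        Nat.mul_le_mul_right _ ha2
      have : 2 ^ s * (2 ^ t - 1) = 2 ^ m - 2 ^ s := by
        rw [Nat.mul_sub, ← pow_add, hst, Nat.mul_one]
      omega
    rw [Nat.mod_eq_of_lt hlt, dsum_mul_pred t a ha1
      (le_trans ha2 (Nat.pow_le_pow_right (by norm_num) hts))]
    right; left
    omega
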